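/- For fixed l ≥ k ≥ 1, the function n ↦ |T^{(k)}(n,l)| / C(n,k) is non-increasing in n (for n ≥ k), where |T^{(k)}(n,l)| is the number of k-sets in [n] meeting each of l almost-equal parts in at most one vertex. -/

import Mathlib

open Finset

/-- A `k`-uniform hypergraph: every edge has `k` vertices. -/
def IsUniform (k : ℕ) {V : Type*} (G : Finset (Finset V)) : Prop :=
  ∀ e ∈ G, e.card = k

/-- The Turán-type hypergraph `T^{(k)}(n,l)`: partition `Fin n` into `l` almost equal
parts (residues mod `l`) and take all `k`-sets meeting each part in at most one vertex. -/
def turan (n l k : ℕ) : Finset (Finset (Fin n)) :=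
  ((Finset.univ : Finset (Fin n)).powersetCard k).filter
    (fun e => (e.image (fun v : Fin n => v.val % l)).card = e.card)

/-- The complete `l`-partite `k`-graph determined by parts `P`. -/
def multipartite {n : ℕ} (k : ℕ) {l : ℕ} (P : Fin l → Finset (Fin n)) :
    Finset (Finset (Fin n)) :=
  ((Finset.univ : Finset (Fin n)).powersetCard k).filter (fun e => ∀ i, (e ∩ P i).card ≤ 1)

/-- `G` contains a (not necessarily induced) copy of the pattern `H`. -/
def Contains {α β : Type*} [DecidableEq α] [DecidableEq β]
    (H : Finset (Finset α)) (G : Finset (Finset β)) : Prop :=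
  ∃ φ : α → β, Set.InjOn φ ↑(H.sup id) ∧ ∀ e ∈ H, e.image φ ∈ G

/-- The `k`-graph `H_l^{(k)}`: the complete graph on core `{0,…,l-1}`, each edge
enlarged by a fresh set of `k-2` vertices, all enlarging sets pairwise disjoint
and disjoint from the core. -/
def Hgraph (k l : ℕ) : Finset (Finset ℕ) :=
  ((((Finset.range l) ×ˢ (Finset.range l)).filter (fun p => p.1 < p.2))).image
    (fun p => insert p.1 (insert p.2
      ((Finset.range (k - 2)).image (fun r => l + (p.1 * l + p.2) * (k - 2) + r))))

/-- The complete `k`-graph on `k+1` vertices, as a pattern on `ℕ`. -/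
def Kpattern (k : ℕ) : Finset (Finset ℕ) := (Finset.range (k + 1)).powersetCard k

/-- The Turán number for a family of patterns `𝓕`: the maximum number of edges of a
`k`-uniform hypergraph on `n` vertices containing no member of `𝓕`. -/
noncomputable def exFam (k : ℕ) (F : Set (Finset (Finset ℕ))) (n : ℕ) : ℕ :=
  sSup {m | ∃ G : Finset (Finset (Fin n)), IsUniform k G ∧
    (∀ H ∈ F, ¬ Contains H G) ∧ G.card = m}

/-- Two hypergraphs on `Fin n` are `m`-close: some relabelling of the vertices makes the
symmetric difference of the edge sets have at most `m` edges. -/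
def Close {n : ℕ} (G H : Finset (Finset (Fin n))) (m : ℝ) : Prop :=
  ∃ σ : Fin n ≃ Fin n, (((symmDiff (G.image (fun e => e.image σ)) H)).card : ℝ) ≤ m

/-- A family `F` of patterns with Turán density `p` is `s`-stable. -/
def Stable (k s : ℕ) (F : Set (Finset (Finset ℕ))) (p : ℝ) : Prop :=
  ∀ ε : ℝ, 0 < ε → ∃ δ : ℝ, 0 < δ ∧ ∃ n₀ : ℕ, ∀ n ≥ n₀,
    ∀ G : Fin (s + 1) → Finset (Finset (Fin n)),
      (∀ i, IsUniform k (G i) ∧ (∀ H ∈ F, ¬ Contains H (G i)) ∧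
        (p - δ) * (n.choose k : ℝ) ≤ ((G i).card : ℝ)) →
      ∃ i j, i ≠ j ∧ Close (G i) (G j) (ε * (n.choose k : ℝ))

/-- The `t`-blowup of a pattern on `ℕ`: each vertex `v` is replaced by the `t` copies
`v*t, …, v*t+t-1`, and each edge by all choices of one copy of each of its vertices. -/
def blowupN (F : Finset (Finset ℕ)) (t : ℕ) : Finset (Finset ℕ) :=
  F.biUnion (fun e => (Finset.univ : Finset ({x // x ∈ e} → Fin t)).image
    (fun f => e.attach.image (fun x : {y // y ∈ e} => x.1 * t + (f x).1)))


namespace Stmt2Aux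

def c (l n i : ℕ) : ℕ := ((range n).filter (fun x => x % l = i)).card


def E (f : ℕ → ℕ) (j : ℕ) (A : Finset ℕ) : ℕ := ∑ B ∈ A.powersetCard j, ∏ i ∈ B, f i

lemma E_zero (f : ℕ → ℕ) (A : Finset ℕ) : E f 0 A = 1 := by simp [E]

lemma E_one (f : ℕ → ℕ) (A : Finset ℕ) : E f 1 A = ∑ i ∈ A, f i := by
  simp [E, powersetCard_one, Finset.sum_map]

lemma E_insert (f : ℕ → ℕ) (j : ℕ) {a : ℕ} {A : Finset ℕ} (ha : a ∉ A) :
    E f (j+1) (insert a A) = f a * E f j A + E f (j+1) A := by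
  have h1 : ∑ B ∈ A.powersetCard j, ∏ i ∈ insert a B, f i = f a * E f j A := by
    rw [E, Finset.mul_sum]
    exact Finset.sum_congr rfl fun B hB =>
      Finset.prod_insert (fun hc => ha ((mem_powersetCard.1 hB).1 hc))
  rw [E, powersetCard_succ_insert ha, Finset.sum_union, Finset.sum_image, h1]
  · rw [add_comm]; rfl
  · intro B hB C hC h
    have hB' := (mem_powersetCard.1 hB).1
    have hC' := (mem_powersetCard.1 hC).1
    have h2 : (insert a B).erase a = (insert a C).erase a := by rw [h]
    rwa [Finset.erase_insert fun hc => ha (hB' hc), Finset.erase_insert fun hc => ha (hC' hc)] at h2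
  · rw [Finset.disjoint_right]
    intro B hB hB'
    obtain ⟨C, hC, rfl⟩ := Finset.mem_image.1 hB
    exact ha ((mem_powersetCard.1 hB').1 (mem_insert_self a C))

lemma E_ident (f : ℕ → ℕ) (A : Finset ℕ) :
    ∀ j, (j+1) * E f (j+1) A = ∑ i ∈ A, f i * E f j (A.erase i) := by
  classical
  induction A using Finset.induction_on with
  | empty => intro j; simp [E]
  | @insert a A' ha IH =>
    intro j
    have herase : ∀ i ∈ A', (insert a A').erase i = insert a (A'.erase i) := by
      intro i hi
      refine Finset.erase_insert_of_ne ?_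
      intro h; exact ha (h ▸ hi)
    rw [Finset.sum_insert ha, Finset.erase_insert ha]
    cases j with
    | zero =>
      rw [E_insert f 0 ha]
      have hsum : ∑ i ∈ A', f i * E f 0 ((insert a A').erase i) = ∑ i ∈ A', f i := by
        simp only [E_zero, mul_one]
      rw [hsum, E_zero]
      have h1 := IH 0
      simp only [E_zero, mul_one, zero_add, one_mul] at h1 ⊢
      omega
    | succ j =>
      rw [E_insert f (j+1) ha]
      have hsum : ∑ i ∈ A', f i * E f (j+1) ((insert a A').erase i)
          = ∑ i ∈ A', f i * (f a * E f j (A'.erase i) + E f (j+1) (A'.erase i)) := by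
        refine Finset.sum_congr rfl fun i hi => ?_
        rw [herase i hi, E_insert f j (fun h => ha (Finset.mem_of_mem_erase h))]
      rw [hsum]
      have expand : ∑ i ∈ A', f i * (f a * E f j (A'.erase i) + E f (j+1) (A'.erase i))
          = f a * (∑ i ∈ A', f i * E f j (A'.erase i)) + ∑ i ∈ A', f i * E f (j+1) (A'.erase i) := by
        rw [Finset.mul_sum, ← Finset.sum_add_distrib]
        exact Finset.sum_congr rfl fun i hi => by ring
      rw [expand, ← IH j, ← IH (j+1)]
      ring




lemma succ_mod_div (l n : ℕ) (hl : 0 < l) :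
    (n % l + 1 = l → ((n+1) % l = 0 ∧ (n+1)/l = n/l + 1)) ∧
    (n % l + 1 < l → ((n+1) % l = n % l + 1 ∧ (n+1)/l = n/l)) := by
  have hdm := Nat.div_add_mod n l
  constructor
  · intro h
    have hn : n + 1 = l * (n/l + 1) := by rw [Nat.mul_succ]; omega
    rw [hn]
    exact ⟨Nat.mul_mod_right _ _, Nat.mul_div_cancel_left _ hl⟩
  · intro h
    have hn : n + 1 = (n % l + 1) + l * (n/l) := by omega
    rw [hn]
    constructor
    · rw [Nat.add_mul_mod_self_left, Nat.mod_eq_of_lt h]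
    · rw [Nat.add_mul_div_left _ _ hl, Nat.div_eq_of_lt h, zero_add]

lemma c_succ (l n i : ℕ) : c l (n+1) i = c l n i + if n % l = i then 1 else 0 := by
  rw [c, c, Finset.range_add_one, Finset.filter_insert]
  split_ifs with h
  · rw [Finset.card_insert_of_notMem (by simp)]
  · rw [add_zero]

lemma c_val (l : ℕ) (hl : 0 < l) :
    ∀ n, ∀ i < l, c l n i = if i < n % l then n/l + 1 else n/l := by
  intro n
  induction n with
  | zero => intro i hi; simp [c, Nat.zero_div, Nat.zero_mod]
  | succ n IH =>
    intro i hi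
    have hmod := Nat.mod_lt n hl
    obtain ⟨h1, h2⟩ := succ_mod_div l n hl
    rw [c_succ, IH i hi]
    rcases Nat.lt_or_ge (n % l + 1) l with hc | hc
    · obtain ⟨hm, hd⟩ := h2 hc
      rw [hm, hd]
      split_ifs <;> omega
    · have hc' : n % l + 1 = l := by omega
      obtain ⟨hm, hd⟩ := h1 hc'
      rw [hm, hd]
      split_ifs <;> omega

lemma c_min (l n : ℕ) (hl : 0 < l) : c l n (n % l) = n / l := by
  rw [c_val l hl n _ (Nat.mod_lt n hl)]
  simp

lemma c_le (l n : ℕ) (hl : 0 < l) {i : ℕ} (hi : i < l) : c l n i ≤ c l n (n % l) + 1 := by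
  rw [c_min l n hl, c_val l hl n i hi]
  split_ifs <;> omega

lemma c_sum (l n : ℕ) (hl : 0 < l) : ∑ i ∈ range l, c l n i = n := by
  have := Finset.card_eq_sum_card_fiberwise
    (f := fun x => x % l) (s := range n) (t := range l)
    (fun x _ => Finset.mem_range.2 (Nat.mod_lt x hl))
  rw [Finset.card_range] at this
  conv_rhs => rw [this]
  rfl





lemma part_card (l n i : ℕ) :
    ((Finset.univ : Finset (Fin n)).filter (fun v => v.val % l = i)).card = c l n i := by
  rw [c, ← Finset.card_image_of_injective _ Fin.val_injective]
  congr 1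
  ext x
  simp only [Finset.mem_image, Finset.mem_filter, Finset.mem_univ, true_and, Finset.mem_range]
  constructor
  · rintro ⟨v, hv, rfl⟩; exact ⟨v.isLt, hv⟩
  · rintro ⟨hx, hm⟩; exact ⟨⟨x, hx⟩, hm, rfl⟩

lemma fiber_card (l n k : ℕ) {B : Finset ℕ} (hB : B ∈ (range l).powersetCard k) :
    ((turan n l k).filter
      (fun e => e.image (fun v : Fin n => v.val % l) = B)).card = ∏ i ∈ B, c l n i := by
  classical
  obtain ⟨hBsub, hBcard⟩ := Finset.mem_powersetCard.1 hB
  set res : Fin n → ℕ := fun v => v.val % l with hres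
  set part : ℕ → Finset (Fin n) := fun i => Finset.univ.filter (fun v => res v = i) with hpart
  have key : (B.pi (fun i => part i)).card =
      ((turan n l k).filter (fun e => e.image res = B)).card := by
    refine Finset.card_bij (fun f _ => B.attach.image (fun x => f x.1 x.2)) ?_ ?_ ?_
    · -- maps into fiber
      intro f hf
      have hf' := Finset.mem_pi.1 hf
      have hresg : ∀ x : {y // y ∈ B}, res (f x.1 x.2) = x.1 := by
        intro x
        have := hf' x.1 x.2
        simpa [hpart] using this
      have hinj : Set.InjOn (fun x : {y // y ∈ B} => f x.1 x.2) ↑B.attach := by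
        intro x _ y _ h
        have h2 : res (f x.1 x.2) = res (f y.1 y.2) := congrArg res h
        rw [hresg x, hresg y] at h2
        have this := h2
        exact Subtype.ext this
      have himg : (B.attach.image (fun x => f x.1 x.2)).image res = B := by
        rw [Finset.image_image]
        have : B.attach.image (res ∘ fun x => f x.1 x.2) = B.attach.image Subtype.val :=
          Finset.image_congr (fun x _ => hresg x)
        rw [this, Finset.attach_image_val]
      have hcard : (B.attach.image (fun x => f x.1 x.2)).card = k := by
        rw [Finset.card_image_of_injOn hinj, Finset.card_attach, hBcard]
      rw [Finset.mem_filter]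
      refine ⟨Finset.mem_filter.2 ⟨Finset.mem_powersetCard.2 ⟨Finset.subset_univ _, hcard⟩, ?_⟩, himg⟩
      rw [himg, hcard, hBcard]
    · -- injective
      intro f hf f' hf' heq
      have hf1 := Finset.mem_pi.1 hf
      have hf1' := Finset.mem_pi.1 hf'
      funext a ha
      have h1 : f a ha ∈ B.attach.image (fun x => f x.1 x.2) :=
        Finset.mem_image.2 ⟨⟨a, ha⟩, Finset.mem_attach _ _, rfl⟩
      have heq' : B.attach.image (fun x => f x.1 x.2) = B.attach.image (fun x => f' x.1 x.2) := heq
      have h2 : f' a ha ∈ B.attach.image (fun x => f x.1 x.2) := by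
        rw [heq']; exact Finset.mem_image.2 ⟨⟨a, ha⟩, Finset.mem_attach _ _, rfl⟩
      obtain ⟨x, _, hx⟩ := Finset.mem_image.1 h2
      have hrx : res (f' a ha) = a := by simpa [hpart] using hf1' a ha
      have hrx2 : res (f x.1 x.2) = x.1 := by simpa [hpart] using hf1 x.1 x.2
      have : (x : {y // y ∈ B}).1 = a := by rw [← hrx2, hx, hrx]
      have hxa : x = ⟨a, ha⟩ := Subtype.ext this
      rw [← hx, hxa]
    · -- surjective
      intro e he
      rw [Finset.mem_filter] at he
      obtain ⟨he1, he2⟩ := he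
      rw [turan, Finset.mem_filter] at he1
      obtain ⟨he3, he4⟩ := he1
      obtain ⟨-, hecard⟩ := Finset.mem_powersetCard.1 he3
      have hinj : Set.InjOn res ↑e := Finset.card_image_iff.1 (by rw [he4])
      have hne : ∀ a ∈ B, (e.filter (fun v => res v = a)).Nonempty := by
        intro a ha
        rw [← he2] at ha
        obtain ⟨v, hv, hva⟩ := Finset.mem_image.1 ha
        exact ⟨v, Finset.mem_filter.2 ⟨hv, hva⟩⟩
      refine ⟨fun a ha => (e.filter (fun v => res v = a)).min' (hne a ha), ?_, ?_⟩
      · rw [Finset.mem_pi]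
        intro a ha
        have := Finset.min'_mem _ (hne a ha)
        rw [Finset.mem_filter] at this
        simp [hpart, this.2]
      · -- image equals e
        have hsub : B.attach.image
            (fun x => (e.filter (fun v => res v = x.1)).min' (hne x.1 x.2)) ⊆ e := by
          intro v hv
          obtain ⟨x, _, hx⟩ := Finset.mem_image.1 hv
          have := Finset.min'_mem _ (hne x.1 x.2)
          rw [Finset.mem_filter] at this
          rw [← hx]; exact this.1
        have hrg : ∀ x : {y // y ∈ B},
            res ((e.filter (fun v => res v = x.1)).min' (hne x.1 x.2)) = x.1 := by
          intro x
          have := Finset.min'_mem _ (hne x.1 x.2)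
          exact (Finset.mem_filter.1 this).2
        have hinj2 : Set.InjOn
            (fun x : {y // y ∈ B} => (e.filter (fun v => res v = x.1)).min' (hne x.1 x.2))
            ↑B.attach := by
          intro x _ y _ h
          have h2 : res ((e.filter (fun v => res v = x.1)).min' (hne x.1 x.2)) =
              res ((e.filter (fun v => res v = y.1)).min' (hne y.1 y.2)) := congrArg res h
          rw [hrg x, hrg y] at h2
          exact Subtype.ext h2
        have hcard2 : (B.attach.image
            (fun x => (e.filter (fun v => res v = x.1)).min' (hne x.1 x.2))).card = e.card := by
          rw [Finset.card_image_of_injOn hinj2, Finset.card_attach, hBcard, hecard]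
        exact Finset.eq_of_subset_of_card_le hsub (le_of_eq hcard2.symm)
  rw [← key, Finset.card_pi]
  exact Finset.prod_congr rfl (fun i _ => part_card l n i)

lemma turan_card (n l k : ℕ) (hl : 0 < l) :
    (turan n l k).card = E (c l n) k (range l) := by
  classical
  have hmem : ∀ e ∈ turan n l k,
      e.image (fun v : Fin n => v.val % l) ∈ (range l).powersetCard k := by
    intro e he
    rw [turan, Finset.mem_filter] at he
    obtain ⟨he1, he2⟩ := he
    obtain ⟨-, hecard⟩ := Finset.mem_powersetCard.1 he1
    refine Finset.mem_powersetCard.2 ⟨?_, by rw [he2, hecard]⟩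
    intro x hx
    obtain ⟨v, _, rfl⟩ := Finset.mem_image.1 hx
    exact Finset.mem_range.2 (Nat.mod_lt _ hl)
  rw [Finset.card_eq_sum_card_fiberwise hmem, E]
  exact Finset.sum_congr rfl (fun B hB => fiber_card l n k hB)

lemma E_congr {f g : ℕ → ℕ} {A : Finset ℕ} (h : ∀ i ∈ A, f i = g i) (j : ℕ) :
    E f j A = E g j A := by
  rw [E, E]
  refine Finset.sum_congr rfl fun B hB => Finset.prod_congr rfl fun i hi => ?_
  exact h i ((Finset.mem_powersetCard.1 hB).1 hi)

lemma main_step (l k n : ℕ) (hk : 1 ≤ k) (hn : k ≤ n) (hl : 0 < l) :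
    (n + 1 - k) * E (c l (n+1)) k (range l) ≤ (n + 1) * E (c l n) k (range l) := by
  classical
  obtain ⟨k', rfl⟩ : ∃ k', k = k' + 1 := ⟨k - 1, by omega⟩
  set r := n % l with hrdef
  have hr : r ∈ range l := Finset.mem_range.2 (Nat.mod_lt n hl)
  set B := (range l).erase r with hBdef
  have hrB : r ∉ B := Finset.notMem_erase r _
  have hA : range l = insert r B := (Finset.insert_erase hr).symm
  set s : ℕ → ℕ := c l n with hsdef
  set T := E s (k'+1) (range l) with hTdef
  set D := E s k' B with hDdef
  -- values of c at n+1
  have hs'r : c l (n+1) r = s r + 1 := by rw [c_succ]; simp [hrdef, hsdef]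
  have hs'B : ∀ j, E (c l (n+1)) j B = E s j B := by
    intro j
    refine E_congr (fun i hi => ?_) j
    have : r ≠ i := fun h => hrB (h ▸ hi)
    rw [c_succ, if_neg this, add_zero]
  -- decomposition of E at n+1
  have hdec : E (c l (n+1)) (k'+1) (range l) = T + D := by
    rw [hA, E_insert _ _ hrB, hs'r, hs'B, hs'B]
    rw [hTdef, hA, E_insert _ _ hrB]
    ring
  rw [hdec]
  -- the key claim : n * D ≤ (k'+1) * T + k' * D
  have hsum_n : s r + ∑ i ∈ B, s i = n := by
    have := c_sum l n hl
    rw [hA, Finset.sum_insert hrB] at this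
    exact this
  have claim : n * D ≤ (k'+1) * T + k' * D := by
    have hident : (k'+1) * T = s r * D + ∑ i ∈ B, s i * E s k' ((range l).erase i) := by
      rw [hTdef, E_ident,
        ← Finset.add_sum_erase _ (fun i => s i * E s k' ((range l).erase i)) hr, ← hBdef]
    cases k' with
    | zero =>
      -- k = 1 : D = 1, T = n
      have hD1 : D = 1 := E_zero s B
      have hT : T = n := by
        rw [hTdef, E_one, c_sum l n hl]
      rw [hD1, hT]; omega
    | succ k'' =>
      have hident2 : (k''+1) * D = ∑ i ∈ B, s i * E s k'' (B.erase i) := by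
        rw [hDdef, E_ident]
      have perI : ∀ i ∈ B, s i * D ≤ s i * E s (k''+1) ((range l).erase i) + s i * E s k'' (B.erase i) := by
        intro i hi
        have hiB := hi
        have hir : i ≠ r := Finset.ne_of_mem_erase hi
        have hil : i < l := Finset.mem_range.1 (Finset.mem_of_mem_erase hi)
        set C := B.erase i with hCdef
        have hiC : i ∉ C := Finset.notMem_erase i _
        have hrC : r ∉ C := fun h => hrB (Finset.mem_of_mem_erase h)
        have hBi : B = insert i C := (Finset.insert_erase hi).symm
        have hRi : (range l).erase i = insert r C := by
          rw [hCdef, hBdef, Finset.erase_right_comm]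
          exact (Finset.insert_erase (Finset.mem_erase.2 ⟨(Ne.symm hir), hr⟩)).symm
        have hEi : E s (k''+1) ((range l).erase i) = s r * E s k'' C + E s (k''+1) C := by
          rw [hRi, E_insert _ _ hrC]
        have hDD : D = s i * E s k'' C + E s (k''+1) C := by
          rw [hDdef, hBi, E_insert _ _ hiC]
        have hle : s i ≤ s r + 1 := c_le l n hl hil
        rw [hEi, hDD]
        calc s i * (s i * E s k'' C + E s (k''+1) C)
            ≤ s i * ((s r + 1) * E s k'' C + E s (k''+1) C) := by gcongr
          _ = s i * (s r * E s k'' C + E s (k''+1) C) + s i * E s k'' C := by ring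
      calc n * D = s r * D + ∑ i ∈ B, s i * D := by
            rw [← hsum_n]; rw [add_mul, Finset.sum_mul]
        _ ≤ s r * D + ∑ i ∈ B, (s i * E s (k''+1) ((range l).erase i) + s i * E s k'' (B.erase i)) := by
            gcongr with i hi
            exact perI i hi
        _ = (s r * D + ∑ i ∈ B, s i * E s (k''+1) ((range l).erase i)) + ∑ i ∈ B, s i * E s k'' (B.erase i) := by
            rw [Finset.sum_add_distrib]; ring
        _ = (k''+1+1) * T + (k''+1) * D := by rw [← hident, ← hident2]
  -- finish : (n+1-(k'+1)) * (T + D) ≤ (n+1) * T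
  have hcancel : (n + 1 - (k'+1)) * D ≤ (k'+1) * T := by
    have h1 : (n + 1 - (k'+1)) * D + k' * D = n * D := by
      rw [← add_mul]; congr 1; omega
    have h2 : (n + 1 - (k'+1)) * D + k' * D ≤ (k'+1) * T + k' * D := by rw [h1]; exact claim
    exact Nat.le_of_add_le_add_right h2
  calc (n + 1 - (k'+1)) * (T + D) = (n + 1 - (k'+1)) * T + (n + 1 - (k'+1)) * D := by ring
    _ ≤ (n + 1 - (k'+1)) * T + (k'+1) * T := by gcongr
    _ = (n + 1 - (k'+1) + (k'+1)) * T := by ring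
    _ = (n + 1) * T := by congr 1; omega


end Stmt2Aux

/-- for fixed `l ≥ k ≥ 1`, the edge density `|T^(k)(n,l)| / C(n,k)` is
non-increasing in `n` for `n ≥ k`. -/

theorem stmt2 (l k : ℕ) (hk : 1 ≤ k) (hl : k ≤ l) :
    ∀ m n : ℕ, k ≤ m → m ≤ n →
      ((turan n l k).card : ℝ) / (n.choose k : ℝ) ≤ ((turan m l k).card : ℝ) / (m.choose k : ℝ) := by
  have hl0 : 0 < l := lt_of_lt_of_le hk hl
  have step : ∀ n : ℕ, k ≤ n →
      ((turan (n+1) l k).card : ℝ) / (((n+1).choose k : ℕ) : ℝ) ≤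
      ((turan n l k).card : ℝ) / ((n.choose k : ℕ) : ℝ) := by
    intro n hn
    have hpos1 : 0 < n.choose k := Nat.choose_pos hn
    have hpos2 : 0 < (n+1).choose k := Nat.choose_pos (by omega)
    rw [div_le_div_iff₀ (by exact_mod_cast hpos2) (by exact_mod_cast hpos1)]
    have hnat : (turan (n+1) l k).card * n.choose k ≤ (turan n l k).card * (n+1).choose k := by
      have hmain := Stmt2Aux.main_step l k n hk hn hl0
      rw [← Stmt2Aux.turan_card (n+1) l k hl0, ← Stmt2Aux.turan_card n l k hl0] at hmain
      have h1 : (n+1-k) * ((turan (n+1) l k).card * n.choose k) ≤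
          (n+1-k) * ((turan n l k).card * (n+1).choose k) := by
        calc (n+1-k) * ((turan (n+1) l k).card * n.choose k)
            = ((n+1-k) * (turan (n+1) l k).card) * n.choose k := by ring
          _ ≤ ((n+1) * (turan n l k).card) * n.choose k := by
              exact Nat.mul_le_mul_right _ hmain
          _ = (turan n l k).card * (n.choose k * (n+1)) := by ring
          _ = (turan n l k).card * ((n+1).choose k * (n+1-k)) := by
              rw [Nat.choose_mul_succ_eq]
          _ = (n+1-k) * ((turan n l k).card * (n+1).choose k) := by ring
      exact Nat.le_of_mul_le_mul_left h1 (by omega)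
    exact_mod_cast hnat
  intro m n hm hmn
  induction n, hmn using Nat.le_induction with
  | base => exact le_refl _
  | succ n hmn IH => exact le_trans (step n (le_trans hm hmn)) IH
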